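/- Let R = [a,b] × [c,d] with a < b, c < d, let H : ℝ² → ℝ² be of class C² and injective on an open neighborhood of R with det DH(x) ≠ 0 for all x, let ε ∈ {+1, −1} be the (constant) sign of det DH on R, let F be a C¹ vector field on H(R), and let F̂(x) = (DH(x))ᵀ F(H(x)). Then ∬_{H(R)} scurl F dA = ε · ∬_R scurl F̂ dA. -/

import Mathlib

open MeasureTheory

/-- The Euclidean dot product on `ℝ × ℝ`. -/
def dot (u v : ℝ × ℝ) : ℝ := u.1 * v.1 + u.2 * v.2


lemma clm_eval_basis (L : ℝ × ℝ →L[ℝ] ℝ) (v : ℝ × ℝ) :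
    L v = v.1 * L (1, 0) + v.2 * L (0, 1) := by
  have hv : v = v.1 • ((1:ℝ), (0:ℝ)) + v.2 • ((0:ℝ), (1:ℝ)) := by
    simp [Prod.ext_iff]
  rw [show L v = L (v.1 • ((1:ℝ), (0:ℝ)) + v.2 • ((0:ℝ), (1:ℝ))) from by rw [← hv]]
  rw [map_add, _root_.map_smul, _root_.map_smul, smul_eq_mul, smul_eq_mul]

lemma clm_det_eq (A : ℝ × ℝ →L[ℝ] ℝ × ℝ) :
    A.det = (A (1, 0)).1 * (A (0, 1)).2 - (A (0, 1)).1 * (A (1, 0)).2 := by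
  have h : A.det = LinearMap.det (A : (ℝ × ℝ) →ₗ[ℝ] ℝ × ℝ) := rfl
  rw [h, ← LinearMap.det_toMatrix (Module.Basis.finTwoProd ℝ), Matrix.det_fin_two]
  simp [LinearMap.toMatrix_apply, Module.Basis.coe_finTwoProd_repr]

lemma scurl_key
    (U : Set (ℝ × ℝ)) (hU : IsOpen U)
    (H : ℝ × ℝ → ℝ × ℝ) (hH : ContDiffOn ℝ 2 H U)
    (V : Set (ℝ × ℝ)) (hV : IsOpen V)
    (M N : ℝ × ℝ → ℝ)
    (hM : ContDiffOn ℝ 1 M V) (hN : ContDiffOn ℝ 1 N V)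
    (Fhat : ℝ × ℝ → ℝ × ℝ)
    (hFhat : ∀ x ∈ U,
      Fhat x = (dot (M (H x), N (H x)) (fderiv ℝ H x (1, 0)),
                dot (M (H x), N (H x)) (fderiv ℝ H x (0, 1))))
    (x : ℝ × ℝ) (hxU : x ∈ U) (hxV : H x ∈ V) :
    fderiv ℝ (fun p => (Fhat p).2) x (1, 0) - fderiv ℝ (fun p => (Fhat p).1) x (0, 1)
      = (fderiv ℝ H x).det * (fderiv ℝ N (H x) (1, 0) - fderiv ℝ M (H x) (0, 1)) := by
  set e1 : ℝ × ℝ := (1, 0) with he1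
  set e2 : ℝ × ℝ := (0, 1) with he2
  set u : ℝ × ℝ → (ℝ × ℝ) →L[ℝ] ℝ × ℝ := fun y => fderiv ℝ H y with hu_def
  have hA : ∀ y ∈ U, HasFDerivAt H (u y) y := fun y hy =>
    ((hH.contDiffAt (hU.mem_nhds hy)).differentiableAt (by norm_num)).hasFDerivAt
  have hu : ContDiffOn ℝ 1 u U := hH.fderiv_of_isOpen hU (by norm_num)
  set A : (ℝ × ℝ) →L[ℝ] ℝ × ℝ := u x with hA_def
  set B : (ℝ × ℝ) →L[ℝ] (ℝ × ℝ) →L[ℝ] ℝ × ℝ := fderiv ℝ u x with hB_def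
  have huB : HasFDerivAt u B x :=
    ((hu.contDiffAt (hU.mem_nhds hxU)).differentiableAt one_ne_zero).hasFDerivAt
  have hsymm : ∀ v w, B v w = B w v := by
    intro v w
    exact second_derivative_symmetric_of_eventually_of_real
      (Filter.eventually_of_mem (hU.mem_nhds hxU) hA) huB v w
  set DM : (ℝ × ℝ) →L[ℝ] ℝ := fderiv ℝ M (H x) with hDM_def
  set DN : (ℝ × ℝ) →L[ℝ] ℝ := fderiv ℝ N (H x) with hDN_def
  have hMd : HasFDerivAt M DM (H x) :=
    ((hM.contDiffAt (hV.mem_nhds hxV)).differentiableAt one_ne_zero).hasFDerivAt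
  have hNd : HasFDerivAt N DN (H x) :=
    ((hN.contDiffAt (hV.mem_nhds hxV)).differentiableAt one_ne_zero).hasFDerivAt
  have hAx : HasFDerivAt H A x := hA x hxU
  have gM : HasFDerivAt (fun p => M (H p)) (DM.comp A) x := hMd.comp x hAx
  have gN : HasFDerivAt (fun p => N (H p)) (DN.comp A) x := hNd.comp x hAx
  -- derivative of p ↦ u p v
  have hw : ∀ v : ℝ × ℝ, HasFDerivAt (fun y => u y v)
      ((u x).comp (0 : (ℝ × ℝ) →L[ℝ] ℝ × ℝ) + B.flip v) x :=
    fun v => huB.clm_apply (hasFDerivAt_const v x)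
  have hd : ∀ v w : ℝ × ℝ,
      fderiv ℝ (fun p => dot (M (H p), N (H p)) (u p v)) x w
        = M (H x) * (B w v).1 + (DM (A w)) * (u x v).1
          + (N (H x) * (B w v).2 + (DN (A w)) * (u x v).2) := by
    intro v w
    have w1 : HasFDerivAt (fun y => (u y v).1)
        ((ContinuousLinearMap.fst ℝ ℝ ℝ).comp
          ((u x).comp (0 : (ℝ × ℝ) →L[ℝ] ℝ × ℝ) + B.flip v)) x := (hw v).fst
    have w2 : HasFDerivAt (fun y => (u y v).2)
        ((ContinuousLinearMap.snd ℝ ℝ ℝ).comp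
          ((u x).comp (0 : (ℝ × ℝ) →L[ℝ] ℝ × ℝ) + B.flip v)) x := (hw v).snd
    have h1 : HasFDerivAt (fun p => dot (M (H p), N (H p)) (u p v)) _ x :=
      ((gM.mul w1).add (gN.mul w2))
    rw [h1.fderiv]
    simp [ContinuousLinearMap.add_apply, ContinuousLinearMap.smul_apply,
      ContinuousLinearMap.comp_apply, ContinuousLinearMap.flip_apply,
      ContinuousLinearMap.coe_fst', ContinuousLinearMap.coe_snd', smul_eq_mul]
    ring
  have hEq1 : fderiv ℝ (fun p => (Fhat p).1) x
      = fderiv ℝ (fun p => dot (M (H p), N (H p)) (u p e1)) x := by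
    apply Filter.EventuallyEq.fderiv_eq
    filter_upwards [hU.mem_nhds hxU] with y hy
    rw [hFhat y hy]
  have hEq2 : fderiv ℝ (fun p => (Fhat p).2) x
      = fderiv ℝ (fun p => dot (M (H p), N (H p)) (u p e2)) x := by
    apply Filter.EventuallyEq.fderiv_eq
    filter_upwards [hU.mem_nhds hxU] with y hy
    rw [hFhat y hy]
  rw [hEq1, hEq2, hd e2 e1, hd e1 e2]
  have hBsymm1 : (B e1 e2).1 = (B e2 e1).1 := by rw [hsymm]
  have hBsymm2 : (B e1 e2).2 = (B e2 e1).2 := by rw [hsymm]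
  rw [hBsymm1, hBsymm2, clm_eval_basis DM (A e1), clm_eval_basis DM (A e2),
    clm_eval_basis DN (A e1), clm_eval_basis DN (A e2), clm_det_eq A]
  show _ = _ * (DN e1 - DM e2)
  ring

/-- Let `R = [a,b] × [c,d]` (with `a < b`, `c < d`), let `H` be C² and injective
on an open neighborhood `U` of `R` with `det DH ≠ 0` everywhere on `U`, let
`ε ∈ {+1, −1}` be the constant sign of `det DH`, let `F = (M, N)` be a C¹
vector field on (an open neighborhood of) `H(R)`, and let
`F̂ (x) = (DH(x))ᵀ F(H x)`.  Then `∬_{H(R)} scurl F dA = ε · ∬_R scurl F̂ dA`. -/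
theorem integral_scurl_image_eq
    (a b c d : ℝ) (hab : a < b) (hcd : c < d)
    (U : Set (ℝ × ℝ)) (hU : IsOpen U)
    (hRU : Set.Icc a b ×ˢ Set.Icc c d ⊆ U)
    (H : ℝ × ℝ → ℝ × ℝ) (hH : ContDiffOn ℝ 2 H U)
    (hinj : Set.InjOn H U)
    (ε : ℝ) (hε : ε = 1 ∨ ε = -1)
    (hdet : ∀ x ∈ U, 0 < ε * (fderiv ℝ H x).det)
    (V : Set (ℝ × ℝ)) (hV : IsOpen V)
    (hSV : H '' (Set.Icc a b ×ˢ Set.Icc c d) ⊆ V)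
    (M N : ℝ × ℝ → ℝ)
    (hM : ContDiffOn ℝ 1 M V) (hN : ContDiffOn ℝ 1 N V)
    (Fhat : ℝ × ℝ → ℝ × ℝ)
    (hFhat : ∀ x ∈ U,
      Fhat x = (dot (M (H x), N (H x)) (fderiv ℝ H x (1, 0)),
                dot (M (H x), N (H x)) (fderiv ℝ H x (0, 1)))) :
    ∫ p in H '' (Set.Icc a b ×ˢ Set.Icc c d),
        (fderiv ℝ N p (1, 0) - fderiv ℝ M p (0, 1))
      = ε * ∫ x in Set.Icc a b ×ˢ Set.Icc c d,
          (fderiv ℝ (fun p => (Fhat p).2) x (1, 0)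
            - fderiv ℝ (fun p => (Fhat p).1) x (0, 1)) := by
  set R : Set (ℝ × ℝ) := Set.Icc a b ×ˢ Set.Icc c d with hR
  have hRmeas : MeasurableSet R := measurableSet_Icc.prod measurableSet_Icc
  have hAx : ∀ x ∈ R, HasFDerivWithinAt H (fderiv ℝ H x) R x := fun x hx =>
    (((hH.contDiffAt (hU.mem_nhds (hRU hx))).differentiableAt
      (by norm_num)).hasFDerivAt).hasFDerivWithinAt
  have cov := integral_image_eq_integral_abs_det_fderiv_smul (μ := volume) hRmeas hAx
    (hinj.mono hRU) (fun p => fderiv ℝ N p (1, 0) - fderiv ℝ M p (0, 1))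
  rw [cov, ← integral_const_mul]
  apply setIntegral_congr_fun hRmeas
  intro x hx
  have hxU : x ∈ U := hRU hx
  have hxV : H x ∈ V := hSV ⟨x, hx, rfl⟩
  have key := scurl_key U hU H hH V hV M N hM hN Fhat hFhat x hxU hxV
  beta_reduce
  rw [key]
  have hpos := hdet x hxU
  have habs : |(fderiv ℝ H x).det| = ε * (fderiv ℝ H x).det := by
    rcases hε with h | h <;> rw [h] at hpos ⊢
    · rw [abs_of_pos (by linarith), one_mul]
    · rw [abs_of_neg (by linarith)]; ring
  rw [smul_eq_mul, habs]
  ring
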